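/- Let Q be a finite group, G a Q-group, and M a Q-G module such that |Q| is invertible in M. Then for every n ≥ 0 there is an isomorphism HH^n_Q(G, M) ≅ H^n(G, M)^Q, where H^n(G, M)^Q denotes the fixed points of the Q-action on the ordinary group cohomology induced by the Q-action on cochains. -/

import Mathlib

namespace InvariantCohomology

noncomputable section

/-- The `i`-th inner face of an inhomogeneous `(n+1)`-tuple: multiply the `i`-th and
`(i+1)`-st entries. -/
def fm {G : Type*} [Group G] {n : ℕ} (g : Fin (n + 1) → G) (i : Fin n) : Fin n → G :=
  fun j =>
    if (j : ℕ) < (i : ℕ) then g j.castSucc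
    else if j = i then g i.castSucc * g i.succ
    else g j.succ

variable (G Q M : Type*) [Group G] [Group Q] [MulDistribMulAction Q G]
  [AddCommGroup M] [DistribMulAction G M] [DistribMulAction Q M]

/-- Inhomogeneous `n`-cochains of `G` with values in `M`. -/
abbrev Cc (n : ℕ) : Type _ := (Fin n → G) → M

/-- The differential of the inhomogeneous cochain complex:
`(δf)(g₁,…,g_{n+1}) = g₁ • f(g₂,…,g_{n+1}) + ∑ᵢ (-1)ⁱ f(g₁,…,gᵢgᵢ₊₁,…,g_{n+1})
  + (-1)^{n+1} f(g₁,…,gₙ)`. -/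
def cb (n : ℕ) : Cc G M n →+ Cc G M (n + 1) where
  toFun f := fun g =>
    g 0 • f (Fin.tail g)
      + ∑ i : Fin n, ((-1 : ℤ) ^ ((i : ℕ) + 1)) • f (fm g i)
      + ((-1 : ℤ) ^ (n + 1)) • f (Fin.init g)
  map_zero' := by funext g; simp
  map_add' f₁ f₂ := by
    funext g
    simp only [Pi.add_apply, smul_add, Finset.sum_add_distrib]
    abel

/-- The differential, re-indexed as a map `Cⁿ⁻¹ → Cⁿ` (zero for `n = 0`). -/
def cdd : ∀ n : ℕ, Cc G M (n - 1) →+ Cc G M n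
  | 0 => 0
  | n + 1 => cb G M n

/-- The action of `q : Q` on cochains, `(q • f)(g₁,…,gₙ) = q • f(q⁻¹g₁,…,q⁻¹gₙ)`. -/
def qcc (q : Q) (n : ℕ) : Cc G M n →+ Cc G M n where
  toFun f := fun g => q • f (q⁻¹ • g)
  map_zero' := by funext g; simp
  map_add' f₁ f₂ := by funext g; simp [smul_add]

/-- The subgroup of `Q`-invariant cochains. -/
def invCc (n : ℕ) : AddSubgroup (Cc G M n) where
  carrier := { f | ∀ q : Q, qcc G Q M q n f = f }
  add_mem' := by intro a b ha hb q; rw [map_add, ha q, hb q]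
  zero_mem' := fun q => map_zero _
  neg_mem' := by intro a ha q; rw [map_neg, ha q]

/-- Invariant cocycles. -/
def ccycQ (n : ℕ) : AddSubgroup (Cc G M n) := (cb G M n).ker ⊓ invCc G Q M n

/-- Coboundaries of invariant cochains. -/
def cbdryQ (n : ℕ) : AddSubgroup (Cc G M n) := (invCc G Q M (n - 1)).map (cdd G M n)

/-- The invariant cohomology `HHⁿ_Q(G, M)`: the cohomology of the subcomplex of
`Q`-invariant cochains. -/
def HHQ (n : ℕ) : Type _ := ccycQ G Q M n ⧸ ((cbdryQ G Q M n).addSubgroupOf (ccycQ G Q M n))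

instance (n : ℕ) : AddCommGroup (HHQ G Q M n) := QuotientAddGroup.Quotient.addCommGroup _

/-- The ordinary group cohomology `Hⁿ(G, M)`, computed from inhomogeneous cochains. -/
def Hcoh (n : ℕ) : Type _ :=
  (cb G M n).ker ⧸ ((cdd G M n).range.addSubgroupOf (cb G M n).ker)

instance (n : ℕ) : AddCommGroup (Hcoh G M n) := QuotientAddGroup.Quotient.addCommGroup _

theorem fm_qsmul (q : Q) {n : ℕ} (g : Fin (n + 1) → G) (i : Fin n) :
    fm (q • g) i = q • fm g i := by
  funext j
  simp only [fm, Pi.smul_apply]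
  split_ifs <;> simp [smul_mul']

theorem cb_qcc (hc : ∀ (q : Q) (g : G) (m : M), q • g • m = (q • g) • q • m)
    (q : Q) (n : ℕ) :
    (cb G M n).comp (qcc G Q M q n) = (qcc G Q M q (n + 1)).comp (cb G M n) := by
  refine AddMonoidHom.ext fun f => funext fun g => ?_
  show (g 0 • (q • f (q⁻¹ • Fin.tail g)))
      + (∑ i : Fin n, ((-1 : ℤ) ^ ((i : ℕ) + 1)) • (q • f (q⁻¹ • fm g i)))
      + ((-1 : ℤ) ^ (n + 1)) • (q • f (q⁻¹ • Fin.init g))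
    = q • ((q⁻¹ • g) 0 • f (Fin.tail (q⁻¹ • g))
      + ∑ i : Fin n, ((-1 : ℤ) ^ ((i : ℕ) + 1)) • f (fm (q⁻¹ • g) i)
      + ((-1 : ℤ) ^ (n + 1)) • f (Fin.init (q⁻¹ • g)))
  rw [smul_add, smul_add]
  have htail : Fin.tail (q⁻¹ • g) = q⁻¹ • Fin.tail g := rfl
  have hinit : Fin.init (q⁻¹ • g) = q⁻¹ • Fin.init g := rfl
  congr 1
  · congr 1
    · rw [htail, hc]
      congr 1
      show g 0 = q • ((q⁻¹ • g) 0)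
      show g 0 = q • (q⁻¹ • g 0)
      rw [smul_inv_smul]
    · rw [Finset.smul_sum]
      refine Finset.sum_congr rfl fun i _ => ?_
      rw [fm_qsmul, smul_comm]
  · rw [hinit, smul_comm]

theorem cdd_qcc (hc : ∀ (q : Q) (g : G) (m : M), q • g • m = (q • g) • q • m)
    (q : Q) (n : ℕ) :
    (cdd G M n).comp (qcc G Q M q (n - 1)) = (qcc G Q M q n).comp (cdd G M n) := by
  cases n with
  | zero =>
    show (0 : Cc G M 0 →+ Cc G M 0).comp (qcc G Q M q 0)
      = (qcc G Q M q 0).comp (0 : Cc G M 0 →+ Cc G M 0)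
    simp
  | succ n => exact cb_qcc G Q M hc q n

/-- The induced action of `q : Q` on the cohomology `Hⁿ(G, M)`; it is well defined thanks
to the `Q`-`G` module compatibility condition `hc`. -/
def qHcoh (hc : ∀ (q : Q) (g : G) (m : M), q • g • m = (q • g) • q • m) (q : Q) (n : ℕ) :
    Hcoh G M n →+ Hcoh G M n :=
  QuotientAddGroup.map _ _
    (((qcc G Q M q n).comp (cb G M n).ker.subtype).codRestrict _ (by
      intro x
      have := congrArg (fun F : Cc G M n →+ Cc G M (n + 1) => F (x : Cc G M n))
        (cb_qcc G Q M hc q n)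
      simp only [AddMonoidHom.comp_apply] at this
      have hx : cb G M n (x : Cc G M n) = 0 := x.2
      show qcc G Q M q n (x : Cc G M n) ∈ (cb G M n).ker
      have hmem : cb G M n (qcc G Q M q n (x : Cc G M n)) = 0 := by
        rw [this, hx, map_zero]
      exact hmem))
    (by
      intro x hx
      rw [AddSubgroup.mem_addSubgroupOf] at hx
      obtain ⟨y, hy⟩ := hx
      rw [AddSubgroup.mem_comap, AddSubgroup.mem_addSubgroupOf]
      refine ⟨qcc G Q M q (n - 1) y, ?_⟩
      have := congrArg (fun F : Cc G M (n - 1) →+ Cc G M n => F y) (cdd_qcc G Q M hc q n)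
      simp only [AddMonoidHom.comp_apply] at this
      show cdd G M n (qcc G Q M q (n - 1) y) = _
      rw [this, hy]
      rfl)

/-- The subgroup `Hⁿ(G, M)^Q` of `Q`-invariant cohomology classes. -/
def HcohInv (hc : ∀ (q : Q) (g : G) (m : M), q • g • m = (q • g) • q • m) (n : ℕ) :
    AddSubgroup (Hcoh G M n) where
  carrier := { x | ∀ q : Q, qHcoh G Q M hc q n x = x }
  add_mem' := by intro a b ha hb q; rw [map_add, ha q, hb q]
  zero_mem' := fun q => map_zero _
  neg_mem' := by intro a ha q; rw [map_neg, ha q]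

end

end InvariantCohomology

namespace InvariantCohomologyAux

open InvariantCohomology

noncomputable section

variable {G Q M : Type*} [Group G] [Group Q] [MulDistribMulAction Q G]
  [AddCommGroup M] [DistribMulAction G M] [DistribMulAction Q M] [Fintype Q]

variable (hM : Function.Bijective fun m : M => (Fintype.card Q : ℤ) • m)

variable (Q M) in
/-- Multiplication by `|Q|` on `M` as an additive hom. -/
def NsmulHom : M →+ M where
  toFun m := (Fintype.card Q : ℤ) • m
  map_zero' := smul_zero _
  map_add' a b := smul_add _ a b

/-- The inverse of multiplication by `|Q|` on `M`. -/
def nu : M →+ M :=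
  ((AddEquiv.ofBijective (NsmulHom Q M) hM).symm : M ≃+ M).toAddMonoidHom

theorem nu_Nsmul (m : M) : nu hM ((Fintype.card Q : ℤ) • m) = m :=
  (AddEquiv.ofBijective (NsmulHom Q M) hM).symm_apply_apply m

theorem Nsmul_nu (m : M) : (Fintype.card Q : ℤ) • nu hM m = m :=
  (AddEquiv.ofBijective (NsmulHom Q M) hM).apply_symm_apply m

theorem nu_comm (T : M → M)
    (hT : ∀ m, T ((Fintype.card Q : ℤ) • m) = (Fintype.card Q : ℤ) • T m) (m : M) :
    nu hM (T m) = T (nu hM m) := by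
  apply hM.1
  show (Fintype.card Q : ℤ) • nu hM (T m) = (Fintype.card Q : ℤ) • T (nu hM m)
  rw [Nsmul_nu, ← hT, Nsmul_nu]

theorem nu_gsmul (g : G) (m : M) : nu hM (g • m) = g • nu hM m :=
  nu_comm hM (fun m => g • m) (fun m => smul_comm g _ m) m

theorem nu_qsmul (q : Q) (m : M) : nu hM (q • m) = q • nu hM m :=
  nu_comm hM (fun m => q • m) (fun m => smul_comm q _ m) m

theorem nu_zsmul (k : ℤ) (m : M) : nu hM (k • m) = k • nu hM m :=
  nu_comm hM (fun m => k • m) (fun m => smul_comm k _ m) m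

variable (G Q M)

/-- Sum over `Q` of the `Q`-action on cochains. -/
def Sc (n : ℕ) : Cc G M n →+ Cc G M n := ∑ q : Q, qcc G Q M q n

variable {G Q M}

theorem Sc_apply (n : ℕ) (f : Cc G M n) (g : Fin n → G) :
    Sc G Q M n f g = ∑ q : Q, q • f (q⁻¹ • g) := by
  show (∑ q : Q, qcc G Q M q n) f g = _
  rw [AddMonoidHom.finset_sum_apply, Finset.sum_apply]
  rfl

theorem Sc_eq_sum (n : ℕ) (f : Cc G M n) :
    Sc G Q M n f = ∑ q : Q, qcc G Q M q n f := by
  show (∑ q : Q, qcc G Q M q n) f = _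
  rw [AddMonoidHom.finset_sum_apply]

theorem Sc_inv (n : ℕ) (f : Cc G M n) : Sc G Q M n f ∈ invCc G Q M n := by
  intro q'
  funext g
  show q' • Sc G Q M n f (q'⁻¹ • g) = Sc G Q M n f g
  rw [Sc_apply, Sc_apply, Finset.smul_sum]
  refine Fintype.sum_bijective (fun q => q' * q) (Group.mulLeft_bijective q') _ _ fun q => ?_
  simp [smul_smul, mul_inv_rev]

theorem Sc_of_inv (n : ℕ) (f : Cc G M n) (hf : f ∈ invCc G Q M n) :
    Sc G Q M n f = (Fintype.card Q : ℤ) • f := by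
  rw [Sc_eq_sum]
  have : ∀ q : Q, qcc G Q M q n f = f := hf
  simp only [this, Finset.sum_const, Finset.card_univ, natCast_zsmul]

variable (G Q M) in
/-- Pointwise application of `nu` to cochains. -/
def nuc (n : ℕ) : Cc G M n →+ Cc G M n where
  toFun f := fun g => nu hM (f g)
  map_zero' := by funext g; simp
  map_add' f₁ f₂ := by funext g; simp

theorem qcc_nuc (q : Q) (n : ℕ) (f : Cc G M n) :
    qcc G Q M q n (nuc G Q M hM n f) = nuc G Q M hM n (qcc G Q M q n f) := by
  funext g
  show q • nu hM (f (q⁻¹ • g)) = nu hM (q • f (q⁻¹ • g))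
  rw [nu_qsmul]

theorem cb_nuc (n : ℕ) (f : Cc G M n) :
    cb G M n (nuc G Q M hM n f) = nuc G Q M hM (n + 1) (cb G M n f) := by
  funext g
  show g 0 • nu hM (f (Fin.tail g))
      + ∑ i : Fin n, ((-1 : ℤ) ^ ((i : ℕ) + 1)) • nu hM (f (fm g i))
      + ((-1 : ℤ) ^ (n + 1)) • nu hM (f (Fin.init g))
    = nu hM (g 0 • f (Fin.tail g)
      + ∑ i : Fin n, ((-1 : ℤ) ^ ((i : ℕ) + 1)) • f (fm g i)
      + ((-1 : ℤ) ^ (n + 1)) • f (Fin.init g))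
  rw [map_add, map_add, map_sum, nu_gsmul, nu_zsmul]
  congr 1
  congr 1
  exact Finset.sum_congr rfl fun i _ => (nu_zsmul hM _ _).symm

theorem cdd_nuc (n : ℕ) (f : Cc G M (n - 1)) :
    cdd G M n (nuc G Q M hM (n - 1) f) = nuc G Q M hM n (cdd G M n f) := by
  cases n with
  | zero =>
    show (0 : Cc G M 0 →+ Cc G M 0) _ = nuc G Q M hM 0 ((0 : Cc G M 0 →+ Cc G M 0) f)
    simp
  | succ n => exact cb_nuc hM n f

variable (G Q M) in
/-- The averaging operator on cochains. -/
def avg (n : ℕ) : Cc G M n →+ Cc G M n := (nuc G Q M hM n).comp (Sc G Q M n)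

theorem avg_inv (n : ℕ) (f : Cc G M n) : avg G Q M hM n f ∈ invCc G Q M n := by
  intro q
  show qcc G Q M q n (nuc G Q M hM n (Sc G Q M n f)) = _
  rw [qcc_nuc, Sc_inv n f q]
  rfl

theorem avg_of_inv (n : ℕ) (f : Cc G M n) (hf : f ∈ invCc G Q M n) :
    avg G Q M hM n f = f := by
  show nuc G Q M hM n (Sc G Q M n f) = f
  rw [Sc_of_inv n f hf]
  funext g
  show nu hM (((Fintype.card Q : ℤ) • f) g) = f g
  rw [Pi.smul_apply, nu_Nsmul]

theorem cb_Sc (hc : ∀ (q : Q) (g : G) (m : M), q • g • m = (q • g) • q • m)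
    (n : ℕ) (f : Cc G M n) :
    cb G M n (Sc G Q M n f) = Sc G Q M (n + 1) (cb G M n f) := by
  rw [Sc_eq_sum, Sc_eq_sum, map_sum]
  refine Finset.sum_congr rfl fun q _ => ?_
  have := congrArg (fun F : Cc G M n →+ Cc G M (n + 1) => F f) (cb_qcc G Q M hc q n)
  exact this

theorem cb_avg (hc : ∀ (q : Q) (g : G) (m : M), q • g • m = (q • g) • q • m)
    (n : ℕ) (f : Cc G M n) :
    cb G M n (avg G Q M hM n f) = avg G Q M hM (n + 1) (cb G M n f) := by
  show cb G M n (nuc G Q M hM n (Sc G Q M n f)) = nuc G Q M hM (n+1) (Sc G Q M (n+1) (cb G M n f))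
  rw [cb_nuc, cb_Sc hc]

theorem cdd_avg (hc : ∀ (q : Q) (g : G) (m : M), q • g • m = (q • g) • q • m)
    (n : ℕ) (f : Cc G M (n - 1)) :
    cdd G M n (avg G Q M hM (n - 1) f) = avg G Q M hM n (cdd G M n f) := by
  cases n with
  | zero =>
    show (0 : Cc G M 0 →+ Cc G M 0) _ = avg G Q M hM 0 ((0 : Cc G M 0 →+ Cc G M 0) f)
    simp
  | succ n => exact cb_avg hM hc n f

variable (G Q M) in
/-- The map `HHⁿ_Q(G,M) → Hⁿ(G,M)` induced by the inclusion of invariant cochains. -/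
def phi1 (n : ℕ) : ccycQ G Q M n →+ Hcoh G M n :=
  (QuotientAddGroup.mk' _).comp (AddSubgroup.inclusion inf_le_left)

theorem phi1_ker (n : ℕ) (x : ccycQ G Q M n)
    (hx : x ∈ (cbdryQ G Q M n).addSubgroupOf (ccycQ G Q M n)) : phi1 G Q M n x = 0 := by
  rw [AddSubgroup.mem_addSubgroupOf] at hx
  obtain ⟨y, -, hyx⟩ := hx
  show QuotientAddGroup.mk (AddSubgroup.inclusion inf_le_left x) = QuotientAddGroup.mk 0
  rw [QuotientAddGroup.eq]
  erw [AddSubgroup.mem_addSubgroupOf, add_zero, AddSubgroup.coe_neg,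
    AddSubgroup.coe_inclusion]
  exact neg_mem ⟨y, hyx⟩

variable (G Q M) in
def phi2 (n : ℕ) : HHQ G Q M n →+ Hcoh G M n :=
  QuotientAddGroup.lift _ (phi1 G Q M n) (phi1_ker n)

theorem phi2_mk (n : ℕ) (f : ccycQ G Q M n) :
    phi2 G Q M n (QuotientAddGroup.mk f)
      = QuotientAddGroup.mk (AddSubgroup.inclusion inf_le_left f) := rfl

theorem phi2_mem (hc : ∀ (q : Q) (g : G) (m : M), q • g • m = (q • g) • q • m) (n : ℕ)
    (x : HHQ G Q M n) : phi2 G Q M n x ∈ HcohInv G Q M hc n := by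
  refine QuotientAddGroup.induction_on x fun f => ?_
  intro q
  rw [phi2_mk]
  show QuotientAddGroup.map _ _ _ _ _ = _
  rw [QuotientAddGroup.map_mk]
  congr 1
  apply Subtype.ext
  show qcc G Q M q n (AddSubgroup.inclusion inf_le_left f : Cc G M n) = _
  erw [AddSubgroup.coe_inclusion]
  exact f.2.2 q

variable (G Q M) in
/-- The comparison map `HHⁿ_Q(G,M) → Hⁿ(G,M)^Q`. -/
def phi (hc : ∀ (q : Q) (g : G) (m : M), q • g • m = (q • g) • q • m) (n : ℕ) :
    HHQ G Q M n →+ HcohInv G Q M hc n :=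
  (phi2 G Q M n).codRestrict _ (phi2_mem hc n)

theorem nuc_Nsmul (n : ℕ) (f : Cc G M n) :
    nuc G Q M hM n ((Fintype.card Q : ℤ) • f) = f := by
  funext g
  show nu hM (((Fintype.card Q : ℤ) • f) g) = f g
  rw [Pi.smul_apply, nu_Nsmul]

include hM in
theorem phi_injective (hc : ∀ (q : Q) (g : G) (m : M), q • g • m = (q • g) • q • m)
    (n : ℕ) : Function.Injective (phi G Q M hc n) := by
  rw [injective_iff_map_eq_zero]
  intro x
  refine QuotientAddGroup.induction_on x fun f hf => ?_
  have hf2 : phi2 G Q M n (QuotientAddGroup.mk f) = 0 := congrArg Subtype.val hf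
  rw [phi2_mk] at hf2
  erw [show (0 : Hcoh G M n) = QuotientAddGroup.mk 0 from rfl, QuotientAddGroup.eq,
    AddSubgroup.mem_addSubgroupOf] at hf2
  erw [add_zero, AddSubgroup.coe_neg, AddSubgroup.coe_inclusion] at hf2
  obtain ⟨y, hy⟩ := neg_mem_iff.mp hf2
  show QuotientAddGroup.mk f = QuotientAddGroup.mk 0
  erw [QuotientAddGroup.eq, AddSubgroup.mem_addSubgroupOf, add_zero, AddSubgroup.coe_neg]
  refine neg_mem ⟨avg G Q M hM (n - 1) y, avg_inv hM (n - 1) y, ?_⟩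
  show cdd G M n (avg G Q M hM (n - 1) y) = (f : Cc G M n)
  rw [cdd_avg hM hc, hy, avg_of_inv hM n _ f.2.2]

include hM in
theorem phi_surjective (hc : ∀ (q : Q) (g : G) (m : M), q • g • m = (q • g) • q • m)
    (n : ℕ) : Function.Surjective (phi G Q M hc n) := by
  rintro ⟨z, hz⟩
  revert hz
  refine QuotientAddGroup.induction_on z fun f hf => ?_
  -- For each `q`, extract a cochain `ys q` with `cdd (ys q) = -(q • f) + f`.
  have key : ∀ q : Q, ∃ y : Cc G M (n - 1),
      cdd G M n y = -(qcc G Q M q n (f : Cc G M n)) + (f : Cc G M n) := by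
    intro q
    have h1 := hf q
    change QuotientAddGroup.map _ _ _ _ (QuotientAddGroup.mk f) = QuotientAddGroup.mk f at h1
    rw [QuotientAddGroup.map_mk, QuotientAddGroup.eq, AddSubgroup.mem_addSubgroupOf] at h1
    obtain ⟨y, hy⟩ := h1
    exact ⟨y, hy⟩
  choose ys hys using key
  set F : Cc G M n := avg G Q M hM n (f : Cc G M n) with hF
  have hSc : Sc G Q M n (f : Cc G M n)
      = (Fintype.card Q : ℤ) • (f : Cc G M n) - cdd G M n (∑ q : Q, ys q) := by
    rw [Sc_eq_sum, map_sum]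
    have : ∀ q : Q, qcc G Q M q n (f : Cc G M n)
        = (f : Cc G M n) - cdd G M n (ys q) := by
      intro q
      rw [hys q]
      abel
    rw [Finset.sum_congr rfl fun q _ => this q, Finset.sum_sub_distrib,
      Finset.sum_const, Finset.card_univ, natCast_zsmul]
  have hFf : F = (f : Cc G M n) - cdd G M n (nuc G Q M hM (n - 1) (∑ q : Q, ys q)) := by
    rw [hF]
    show nuc G Q M hM n (Sc G Q M n (f : Cc G M n)) = _
    rw [hSc, map_sub, nuc_Nsmul, ← cdd_nuc]
  have hFker : F ∈ (cb G M n).ker := by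
    show cb G M n F = 0
    rw [hF, cb_avg hM hc, f.2, map_zero]
  have hFcyc : F ∈ ccycQ G Q M n := ⟨hFker, avg_inv hM n _⟩
  refine ⟨QuotientAddGroup.mk ⟨F, hFcyc⟩, ?_⟩
  apply Subtype.ext
  show phi2 G Q M n (QuotientAddGroup.mk ⟨F, hFcyc⟩) = QuotientAddGroup.mk f
  erw [phi2_mk, QuotientAddGroup.eq, AddSubgroup.mem_addSubgroupOf]
  refine ⟨nuc G Q M hM (n - 1) (∑ q : Q, ys q), ?_⟩
  show cdd G M n (nuc G Q M hM (n - 1) (∑ q : Q, ys q))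
    = ((-(AddSubgroup.inclusion inf_le_left ⟨F, hFcyc⟩) + f : (cb G M n).ker) : Cc G M n)
  erw [AddSubgroup.coe_add, AddSubgroup.coe_neg, AddSubgroup.coe_inclusion]
  show _ = -F + (f : Cc G M n)
  rw [hFf]
  abel

end

end InvariantCohomologyAux

open InvariantCohomology in
/-- If `Q` is finite and `|Q|` is invertible in the `Q`-`G` module `M`,
then `HHⁿ_Q(G, M) ≅ Hⁿ(G, M)^Q` for every `n`. -/
theorem invariant_cohomology_iso_fixedPoints
    (G Q M : Type*) [Group G] [Group Q] [MulDistribMulAction Q G]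
    [AddCommGroup M] [DistribMulAction G M] [DistribMulAction Q M] [Fintype Q]
    (hc : ∀ (q : Q) (g : G) (m : M), q • g • m = (q • g) • q • m)
    (hM : Function.Bijective fun m : M => (Fintype.card Q : ℤ) • m) (n : ℕ) :
    Nonempty (HHQ G Q M n ≃+ HcohInv G Q M hc n) :=
  ⟨AddEquiv.ofBijective (InvariantCohomologyAux.phi G Q M hc n)
    ⟨InvariantCohomologyAux.phi_injective hM hc n,
      InvariantCohomologyAux.phi_surjective hM hc n⟩⟩
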